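/- For real numbers α > 0 and 0 ≤ β < 1, setting p = 1/(1-β), the series S(2,α,β) = ∑_{k=0}^∞ (α + βk)^{k+1}/k! · e^{-(α+βk)} equals p·(α·p + β²·p²) = α/(1-β)² + β²/(1-β)³. -/

import Mathlib

open Finset Filter Real Topology

noncomputable def Sj (n j : ℕ) (x : ℝ) : ℝ :=
  ∑ k ∈ range (n+1), (-1:ℝ)^k * (n.choose k) * (x + k)^j

lemma Sj_rec (n j : ℕ) (x : ℝ) :
    Sj (n+1) j x = Sj n j x - Sj n j (x+1) := by
  have key : Sj (n+1) j x
      = (∑ i ∈ range (n+1), (-((-1:ℝ)^i * (n.choose i) * ((x+1) + i)^j)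
          + (-((-1:ℝ)^i * (n.choose (i+1)) * (x + (i+1:ℕ))^j))))
        + (-1:ℝ)^0 * ((n+1).choose 0) * (x + (0:ℕ))^j := by
    rw [Sj, Finset.sum_range_succ']
    congr 1
    apply Finset.sum_congr rfl
    intro i _
    rw [Nat.choose_succ_succ]
    push_cast
    ring
  rw [key, Finset.sum_add_distrib]
  have h3 : ∑ i ∈ range (n+1), -((-1:ℝ)^i * (n.choose i) * ((x+1) + i)^j)
      = - Sj n j (x+1) := by
    rw [Sj, ← Finset.sum_neg_distrib]
  have h4 : ∑ i ∈ range (n+1), -((-1:ℝ)^i * (n.choose (i+1)) * (x + (i+1:ℕ))^j)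
      = -((-1:ℝ)^0 * (n.choose 0) * (x + (0:ℕ))^j) + Sj n j x := by
    have e1 : ∑ i ∈ range (n+1), -((-1:ℝ)^i * (n.choose (i+1)) * (x + (i+1:ℕ))^j)
        = ∑ i ∈ range n, -((-1:ℝ)^i * (n.choose (i+1)) * (x + (i+1:ℕ))^j) := by
      rw [Finset.sum_range_succ, Nat.choose_succ_self]
      simp
    have e2 : Sj n j x = (∑ i ∈ range n, (-1:ℝ)^(i+1) * (n.choose (i+1)) * (x + (i+1:ℕ))^j)
        + (-1:ℝ)^0 * (n.choose 0) * (x + (0:ℕ))^j := by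
      rw [Sj, Finset.sum_range_succ']
    rw [e1, e2]
    have e3 : ∀ i ∈ range n, -((-1:ℝ)^i * (n.choose (i+1)) * (x + (i+1:ℕ))^j)
        = (-1:ℝ)^(i+1) * (n.choose (i+1)) * (x + (i+1:ℕ))^j := by
      intro i _; ring
    rw [Finset.sum_congr rfl e3]
    ring
  rw [h3, h4]
  simp
  ring

lemma Sj_binom (n j : ℕ) (x : ℝ) :
    Sj n j (x+1) = ∑ m ∈ range (j+1), (j.choose m : ℝ) * Sj n m x := by
  rw [Sj]
  have h1 : ∀ k ∈ range (n+1), (-1:ℝ)^k * (n.choose k) * ((x+1) + k)^j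
      = ∑ m ∈ range (j+1), (j.choose m : ℝ) * ((-1:ℝ)^k * (n.choose k) * (x + k)^m) := by
    intro k _
    rw [show (x+1) + (k:ℝ) = (x + k) + 1 by ring, add_pow, Finset.mul_sum]
    apply Finset.sum_congr rfl
    intro m _
    simp
    ring
  rw [Finset.sum_congr rfl h1, Finset.sum_comm]
  apply Finset.sum_congr rfl
  intro m _
  rw [Sj, Finset.mul_sum]

lemma altSum (n : ℕ) : ∀ j, j < n → ∀ x : ℝ, Sj n j x = 0 := by
  induction n with
  | zero => intro j hj; omega
  | succ n ih =>
    intro j hj x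
    rw [Sj_rec, Sj_binom, Finset.sum_range_succ]
    have h0 : ∀ m ∈ range j, (j.choose m : ℝ) * Sj n m x = 0 := by
      intro m hm
      rw [ih m (by simp at hm; omega) x]
      ring
    rw [Finset.sum_congr rfl h0]
    simp

noncomputable def Tc (x : ℝ) : ℕ → ℝ
  | 0 => 1
  | (k+1) => x * (x + (k+1:ℕ))^k

lemma neg_one_pow_sub {m k : ℕ} (h : k ≤ m) : (-1:ℝ)^(m-k) = (-1)^m * (-1)^k := by
  have h1 : (-1:ℝ)^(m-k) * (-1)^k = (-1)^m := by
    rw [← pow_add]; congr 1; omega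
  have h2 : (-1:ℝ)^k * (-1)^k = 1 := by
    rw [← pow_add, ← two_mul, pow_mul]; norm_num
  calc (-1:ℝ)^(m-k) = (-1)^(m-k) * ((-1)^k * (-1)^k) := by rw [h2, mul_one]
  _ = (-1)^m * (-1)^k := by rw [← mul_assoc, h1]

lemma choose_mul_sub (n k : ℕ) (hk : k ≤ n) :
    ((n+1).choose k : ℝ) * ((n+1:ℝ) - k) = (n+1:ℝ) * (n.choose k) := by
  have h1 : ((n+1).choose k) * ((n+1) - k) = (n+1) * n.choose k := by
    rw [← Nat.choose_succ_right_eq, ← Nat.add_one_mul_choose_eq]; try ring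
  have := congrArg (fun m : ℕ => (m:ℝ)) h1
  push_cast [Nat.cast_sub (show k ≤ n+1 by omega)] at this
  linarith [this]

lemma hasDerivAt_sub_pow (c : ℝ) (m : ℕ) (y : ℝ) :
    HasDerivAt (fun y : ℝ => (y - c)^m) (m * (y - c)^(m-1)) y := by
  have h := ((hasDerivAt_id y).sub_const c).fun_pow m
  simpa using h

theorem abel_id (n : ℕ) (x y : ℝ) :
    ∑ k ∈ range (n+1), ((n.choose k : ℝ)) * Tc x k * (y - k)^(n-k) = (x+y)^n := by
  induction n generalizing y with
  | zero => simp [Tc]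
  | succ n ih =>
    set f : ℝ → ℝ := fun y =>
      (∑ k ∈ range (n+2), ((n+1).choose k : ℝ) * Tc x k * (y - k)^(n+1-k)) - (x+y)^(n+1) with hf
    have hderiv : ∀ y, HasDerivAt f 0 y := by
      intro y
      have hL : HasDerivAt (fun y => ∑ k ∈ range (n+2), ((n+1).choose k : ℝ) * Tc x k * (y - k)^(n+1-k))
          (∑ k ∈ range (n+2), ((n+1).choose k : ℝ) * Tc x k * ((n+1-k:ℕ) * (y - k)^(n-k))) y := by
        apply HasDerivAt.fun_sum
        intro k hk
        have h := (hasDerivAt_sub_pow (k:ℝ) (n+1-k) y).const_mul (((n+1).choose k : ℝ) * Tc x k)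
        have he : (n+1-k) - 1 = n - k := by omega
        rw [he] at h
        convert h using 1
        try ring
      have hR : HasDerivAt (fun y : ℝ => (x+y)^(n+1)) ((n+1) * (x+y)^n) y := by
        have h := ((hasDerivAt_id y).const_add x).fun_pow (n+1)
        simpa using h
      have hsum : (∑ k ∈ range (n+2), ((n+1).choose k : ℝ) * Tc x k * ((n+1-k:ℕ) * (y - k)^(n-k)))
          = (n+1) * (x+y)^n := by
        rw [Finset.sum_range_succ]
        have hlast : ((n+1).choose (n+1) : ℝ) * Tc x (n+1) * ((n+1-(n+1):ℕ) * (y - (n+1:ℕ))^(n-(n+1))) = 0 := by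
          simp [Nat.sub_self]
        rw [hlast, add_zero]
        have hstep : ∀ k ∈ range (n+1), ((n+1).choose k : ℝ) * Tc x k * ((n+1-k:ℕ) * (y - k)^(n-k))
            = (n+1) * ((n.choose k : ℝ) * Tc x k * (y - k)^(n-k)) := by
          intro k hk
          simp only [mem_range] at hk
          have h := choose_mul_sub n k (by omega)
          have hc : ((n+1-k:ℕ) : ℝ) = (n+1:ℝ) - k := by
            rw [Nat.cast_sub (by omega)]; push_cast; try ring
          rw [hc]
          linear_combination (Tc x k * (y - (k:ℝ))^(n-k)) * h
        rw [Finset.sum_congr rfl hstep, ← Finset.mul_sum, ih y]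
        try push_cast
        try ring
      have := hL.fun_sub hR
      rw [hsum] at this
      simpa using this
    have hconst : f y = f (-x) := by
      have hdiff : Differentiable ℝ f := fun y => (hderiv y).differentiableAt
      exact is_const_of_deriv_eq_zero hdiff (fun y => (hderiv y).deriv) y (-x)
    have hfx : f (-x) = 0 := by
      have e1 : ∀ k ∈ range (n+2), ((n+1).choose k : ℝ) * Tc x k * ((-x) - k)^(n+1-k)
          = (x * (-1:ℝ)^(n+1)) * ((-1:ℝ)^k * ((n+1).choose k : ℝ) * (x + k)^n) := by
        intro k hk
        simp only [mem_range] at hk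
        have hneg : ((-x) - (k:ℝ))^(n+1-k) = (-1:ℝ)^(n+1-k) * (x + k)^(n+1-k) := by
          rw [show (-x) - (k:ℝ) = -(x + k) by ring, neg_pow]
        rw [hneg, neg_one_pow_sub (show k ≤ n+1 by omega)]
        cases k with
        | zero =>
          show ((n+1).choose 0 : ℝ) * Tc x 0 * ((-1:ℝ)^(n+1) * (-1:ℝ)^0 * (x + (0:ℕ))^(n+1-0)) = _
          simp [Tc]; ring
        | succ m =>
          show ((n+1).choose (m+1) : ℝ) * (x * (x + (m+1:ℕ))^m) * _ = _
          have hp : (x + ((m+1:ℕ):ℝ))^m * (x + ((m+1:ℕ):ℝ))^(n+1-(m+1)) = (x + ((m+1:ℕ):ℝ))^n := by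
            rw [← pow_add]; congr 1; omega
        
          calc ((n+1).choose (m+1) : ℝ) * (x * (x + (m+1:ℕ))^m)
                * ((-1:ℝ)^(n+1) * (-1:ℝ)^(m+1) * (x + (m+1:ℕ))^(n+1-(m+1)))
              = (x * (-1:ℝ)^(n+1)) * ((-1:ℝ)^(m+1) * ((n+1).choose (m+1) : ℝ)
                * ((x + ((m+1:ℕ):ℝ))^m * (x + ((m+1:ℕ):ℝ))^(n+1-(m+1)))) := by ring
          _ = _ := by rw [hp]
      have e2 : f (-x) = (x * (-1:ℝ)^(n+1)) * Sj (n+1) n x - (x + -x)^(n+1) := by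
        rw [hf]
        simp only
        rw [Finset.sum_congr rfl e1, ← Finset.mul_sum, Sj]
      rw [e2, altSum (n+1) n (by omega) x]
      simp
    have : f y = 0 := hconst.trans hfx
    rw [hf] at this
    simp only at this
    linarith [this]

noncomputable def Kc : ℕ → ℝ
  | 0 => 0
  | (k+1) => ((k+1:ℕ):ℝ)^k

theorem J_id (n : ℕ) (hn : 1 ≤ n) (y : ℝ) :
    ∑ k ∈ range (n+1), ((n.choose k : ℝ)) * Kc k * (y - k)^(n-k) = n * y^(n-1) := by
  induction n generalizing y with
  | zero => omega
  | succ n ih =>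
    rcases Nat.eq_or_lt_of_le hn with h1 | h1
    · -- n + 1 = 1
      have hn0 : n = 0 := by omega
      subst hn0
      rw [Finset.sum_range_succ, Finset.sum_range_succ, Finset.sum_range_zero]
      simp [Kc]
    · have hn1 : 1 ≤ n := by omega
      set f : ℝ → ℝ := fun y =>
        (∑ k ∈ range (n+2), ((n+1).choose k : ℝ) * Kc k * (y - k)^(n+1-k)) - (n+1) * y^n with hf
      have hderiv : ∀ y, HasDerivAt f 0 y := by
        intro y
        have hL : HasDerivAt (fun y => ∑ k ∈ range (n+2), ((n+1).choose k : ℝ) * Kc k * (y - k)^(n+1-k))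
            (∑ k ∈ range (n+2), ((n+1).choose k : ℝ) * Kc k * ((n+1-k:ℕ) * (y - k)^(n-k))) y := by
          apply HasDerivAt.fun_sum
          intro k hk
          have h := (hasDerivAt_sub_pow (k:ℝ) (n+1-k) y).const_mul (((n+1).choose k : ℝ) * Kc k)
          have he : (n+1-k) - 1 = n - k := by omega
          rw [he] at h
          convert h using 1
          try ring
        have hR : HasDerivAt (fun y : ℝ => ((n:ℝ)+1) * y^n) (((n:ℝ)+1) * (n * y^(n-1))) y := by
          exact (hasDerivAt_pow n y).const_mul _
        have hsum : (∑ k ∈ range (n+2), ((n+1).choose k : ℝ) * Kc k * ((n+1-k:ℕ) * (y - k)^(n-k)))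
            = ((n:ℝ)+1) * (n * y^(n-1)) := by
          rw [Finset.sum_range_succ]
          have hlast : ((n+1).choose (n+1) : ℝ) * Kc (n+1) * ((n+1-(n+1):ℕ) * (y - (n+1:ℕ))^(n-(n+1))) = 0 := by
            simp [Nat.sub_self]
          rw [hlast, add_zero]
          have hstep : ∀ k ∈ range (n+1), ((n+1).choose k : ℝ) * Kc k * ((n+1-k:ℕ) * (y - k)^(n-k))
              = ((n:ℝ)+1) * ((n.choose k : ℝ) * Kc k * (y - k)^(n-k)) := by
            intro k hk
            simp only [mem_range] at hk
            have h := choose_mul_sub n k (by omega)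
            have hc : ((n+1-k:ℕ) : ℝ) = (n+1:ℝ) - k := by
              rw [Nat.cast_sub (by omega)]; push_cast; try ring
            rw [hc]
            linear_combination (Kc k * (y - (k:ℝ))^(n-k)) * h
          rw [Finset.sum_congr rfl hstep, ← Finset.mul_sum, ih hn1 y]
        have := hL.fun_sub hR
        rw [hsum] at this
        simpa using this
      have hconst : f y = f 0 := by
        have hdiff : Differentiable ℝ f := fun y => (hderiv y).differentiableAt
        exact is_const_of_deriv_eq_zero hdiff (fun y => (hderiv y).deriv) y 0
      have hfx : f 0 = 0 := by
        have e1 : ∀ k ∈ range (n+2), ((n+1).choose k : ℝ) * Kc k * ((0:ℝ) - k)^(n+1-k)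
            = ((-1:ℝ)^(n+1)) * ((-1:ℝ)^k * ((n+1).choose k : ℝ) * ((0:ℝ) + k)^n) := by
          intro k hk
          simp only [mem_range] at hk
          have hneg : ((0:ℝ) - (k:ℝ))^(n+1-k) = (-1:ℝ)^(n+1-k) * ((k:ℝ))^(n+1-k) := by
            rw [show (0:ℝ) - (k:ℝ) = -(k:ℝ) by ring, neg_pow]
          rw [hneg, neg_one_pow_sub (show k ≤ n+1 by omega)]
          cases k with
          | zero => simp [Kc]; omega
          | succ m =>
            show ((n+1).choose (m+1) : ℝ) * (((m+1:ℕ):ℝ))^m * _ = _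
            have hp : (((m+1:ℕ):ℝ))^m * (((m+1:ℕ):ℝ))^(n+1-(m+1)) = (((m+1:ℕ):ℝ))^n := by
              rw [← pow_add]; congr 1; omega
            calc ((n+1).choose (m+1) : ℝ) * (((m+1:ℕ):ℝ))^m
                  * ((-1:ℝ)^(n+1) * (-1:ℝ)^(m+1) * (((m+1:ℕ):ℝ))^(n+1-(m+1)))
                = ((-1:ℝ)^(n+1)) * ((-1:ℝ)^(m+1) * ((n+1).choose (m+1) : ℝ)
                  * ((((m+1:ℕ):ℝ))^m * (((m+1:ℕ):ℝ))^(n+1-(m+1)))) := by ring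
            _ = ((-1:ℝ)^(n+1)) * ((-1:ℝ)^(m+1) * ((n+1).choose (m+1) : ℝ) * (((m+1:ℕ):ℝ))^n) := by rw [hp]
            _ = _ := by rw [show (0:ℝ) + ((m+1:ℕ):ℝ) = ((m+1:ℕ):ℝ) by ring]
        have e2 : f 0 = ((-1:ℝ)^(n+1)) * Sj (n+1) n 0 - (n+1) * (0:ℝ)^n := by
          rw [hf]
          simp only
          rw [Finset.sum_congr rfl e1, ← Finset.mul_sum, Sj]
        rw [e2, altSum (n+1) n (by omega) 0]
        rw [zero_pow (by omega : n ≠ 0)]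
        ring
      have : f y = 0 := hconst.trans hfx
      rw [hf] at this
      simp only at this
      push_cast
      linarith [this]

lemma pow_div_le_exp (x : ℝ) (hx : 0 ≤ x) (k : ℕ) : x^k / k.factorial ≤ Real.exp x := by
  have h1 := Real.sum_le_exp_of_nonneg hx (k+1)
  have h2 := Finset.single_le_sum (f := fun i => x^i / i.factorial)
    (fun i _ => by positivity) (Finset.self_mem_range_succ k)
  linarith

lemma kk_le (k : ℕ) : ((k:ℝ))^k ≤ Real.exp 1 ^ k * k.factorial := by
  have h := pow_div_le_exp (k:ℝ) (by positivity) k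
  have he : Real.exp (k:ℝ) = Real.exp 1 ^ k := by
    rw [← Real.exp_nat_mul]; norm_num
  have hfac : (0:ℝ) < k.factorial := by positivity
  rw [div_le_iff₀ hfac, he] at h
  linarith

lemma shift_pow_le {c : ℝ} (hc : 0 ≤ c) {k : ℕ} (hk : 1 ≤ k) :
    (c + k)^k ≤ Real.exp c * (k:ℝ)^k := by
  have hkpos : (0:ℝ) < k := by exact_mod_cast hk
  have h1 : c + (k:ℝ) = (k:ℝ) * (1 + c/k) := by field_simp; ring
  have h2 : 1 + c/k ≤ Real.exp (c/k) := by
    have := Real.add_one_le_exp (c/k); linarith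
  have h3 : (0:ℝ) ≤ 1 + c/k := by positivity
  calc (c + (k:ℝ))^k = (k:ℝ)^k * (1 + c/k)^k := by rw [h1, mul_pow]
  _ ≤ (k:ℝ)^k * Real.exp (c/k)^k := by
      apply mul_le_mul_of_nonneg_left _ (by positivity)
      exact pow_le_pow_left₀ h3 h2 k
  _ = Real.exp c * (k:ℝ)^k := by
      rw [← Real.exp_nat_mul]
      rw [mul_div_cancel₀ c (ne_of_gt hkpos)]
      ring

lemma coeff_bound {a M x r : ℝ} (ha0 : 0 ≤ a) {k : ℕ} (hM : 0 ≤ M)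
    (hak : a ≤ M * (Real.exp 1 ^ k * k.factorial)) (hr : 0 ≤ r) (hx : |x| ≤ r) :
    |a / k.factorial * x^k| ≤ M * (Real.exp 1 * r)^k := by
  have hfac : (0:ℝ) < k.factorial := by positivity
  rw [abs_mul, abs_div, abs_pow, abs_of_nonneg ha0, Nat.abs_cast]
  have hxk : |x|^k ≤ r^k := pow_le_pow_left₀ (abs_nonneg x) hx k
  calc a / k.factorial * |x|^k ≤ (M * (Real.exp 1 ^ k * k.factorial)) / k.factorial * r^k := by
        gcongr
  _ = M * (Real.exp 1 * r)^k := by field_simp [mul_pow]; ring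

lemma deriv_coeff_bound {a M x r : ℝ} (ha0 : 0 ≤ a) {k : ℕ}
    (hak : a ≤ M * (Real.exp 1 ^ k * k.factorial)) (hr : 0 < r) (hx : |x| ≤ r) (hM : 0 ≤ M) :
    |a / k.factorial * (k * x^(k-1))| ≤ M / r * (k * (Real.exp 1 * r)^k) := by
  cases k with
  | zero => simp
  | succ m =>
    have hfac : (0:ℝ) < (m+1).factorial := by positivity
    rw [abs_mul, abs_div, abs_mul, abs_pow, abs_of_nonneg ha0, Nat.abs_cast, Nat.abs_cast]
    have hxk : |x|^(m+1-1) ≤ r^m := by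
      simpa using pow_le_pow_left₀ (abs_nonneg x) hx m
    have step1 : a / (m+1).factorial * ((m+1:ℕ) * |x|^(m+1-1))
        ≤ (M * (Real.exp 1 ^ (m+1) * (m+1).factorial)) / (m+1).factorial * ((m+1:ℕ) * r^m) := by
      gcongr
    apply le_trans step1
    have : (M * (Real.exp 1 ^ (m+1) * (m+1).factorial)) / (m+1).factorial * ((m+1:ℕ) * r^m)
        = M / r * ((m+1:ℕ) * (Real.exp 1 * r)^(m+1)) := by
      field_simp [mul_pow]
      ring
    rw [this]

lemma hasDerivAt_tsum_on {f f' : ℕ → ℝ → ℝ} {u v : ℕ → ℝ} {r : ℝ}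
    (hu : Summable u) (hv : Summable v)
    (hd : ∀ k, ∀ x ∈ Set.Ioo (-r) r, HasDerivAt (f k) (f' k x) x)
    (hbv : ∀ k, ∀ x ∈ Set.Ioo (-r) r, |f k x| ≤ v k)
    (hbu : ∀ k, ∀ x ∈ Set.Ioo (-r) r, |f' k x| ≤ u k)
    {x : ℝ} (hx : x ∈ Set.Ioo (-r) r) :
    HasDerivAt (fun t => ∑' k, f k t) (∑' k, f' k x) x := by
  apply hasDerivAt_of_tendstoLocallyUniformlyOn (l := atTop) isOpen_Ioo
    (f := fun (N : ℕ) x => ∑ k ∈ Finset.range N, f k x)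
    (f' := fun (N : ℕ) x => ∑ k ∈ Finset.range N, f' k x)
    (g := fun t => ∑' k, f k t)
    (g' := fun x => ∑' k, f' k x)
  · exact (tendstoUniformlyOn_tsum_nat hu
      (fun k x hxs => by simpa using hbu k x hxs)).tendstoLocallyUniformlyOn
  · exact Eventually.of_forall (fun N y hy => HasDerivAt.fun_sum (fun k _ => hd k y hy))
  · intro y hy
    have hs : Summable fun k => f k y :=
      Summable.of_norm_bounded hv (fun k => by simpa using hbv k y hy)
    exact hs.hasSum.tendsto_sum_nat
  · exact hx

lemma const_eval {q : ℝ → ℝ} {t₀ L : ℝ} (ht : 0 < t₀)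
    (hconst : ∀ s ∈ Set.Ioo 0 t₀, q s = q t₀)
    (hlim : Tendsto q (nhdsWithin 0 (Set.Ioi 0)) (nhds L)) : q t₀ = L := by
  have hne : (nhdsWithin (0:ℝ) (Set.Ioo 0 t₀)).NeBot := by
    rw [← mem_closure_iff_nhdsWithin_neBot, closure_Ioo ht.ne]
    exact ⟨le_refl 0, ht.le⟩
  have h1 : Tendsto q (nhdsWithin 0 (Set.Ioo 0 t₀)) (nhds L) :=
    hlim.mono_left (nhdsWithin_mono 0 (fun x hx => hx.1))
  have h2 : Tendsto q (nhdsWithin 0 (Set.Ioo 0 t₀)) (nhds (q t₀)) := by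
    refine Tendsto.congr' ?_ tendsto_const_nhds
    filter_upwards [self_mem_nhdsWithin] with s hs
    exact (hconst s hs).symm
  exact tendsto_nhds_unique h2 h1

lemma const_on_Ioo {f : ℝ → ℝ} {r t₀ : ℝ} (hr : t₀ < r)
    (hd : ∀ x ∈ Set.Ioo (0:ℝ) r, HasDerivAt f 0 x) :
    ∀ s ∈ Set.Ioo 0 t₀, f s = f t₀ := by
  intro s hs
  have key := constant_of_has_deriv_right_zero (f := f) (a := s) (b := t₀)
    (fun x hx => (hd x ⟨lt_of_lt_of_le hs.1 hx.1, lt_of_le_of_lt hx.2 hr⟩).continuousAt.continuousWithinAt)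
    (fun x hx => (hd x ⟨lt_of_lt_of_le hs.1 hx.1, lt_trans hx.2 hr⟩).hasDerivWithinAt)
  exact (key t₀ ⟨hs.2.le, le_refl t₀⟩).symm

-- series definitions and basic bounds
noncomputable def wfun (x : ℝ) : ℝ := ∑' k, Kc k / k.factorial * x^k
noncomputable def wd (x : ℝ) : ℝ := ∑' k : ℕ, Kc k / k.factorial * (k * x^(k-1))
noncomputable def w1fun (x : ℝ) : ℝ := ∑' k : ℕ, Kc (k+1) / (k+1).factorial * x^k
noncomputable def gfun (x : ℝ) : ℝ := ∑' k : ℕ, ((k:ℝ))^k / k.factorial * x^k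
noncomputable def ffun (c x : ℝ) : ℝ := ∑' k, Tc c k / k.factorial * x^k
noncomputable def fd (c x : ℝ) : ℝ := ∑' k : ℕ, Tc c k / k.factorial * (k * x^(k-1))
noncomputable def Gfun (c x : ℝ) : ℝ := ∑' k : ℕ, (c+k)^k / k.factorial * x^k
noncomputable def Gd (c x : ℝ) : ℝ := ∑' k : ℕ, (c+k)^k / k.factorial * (k * x^(k-1))
noncomputable def Hfun (c x : ℝ) : ℝ := ∑' k : ℕ, (c+k)^(k+1) / k.factorial * x^k

lemma Kc_nonneg (k : ℕ) : 0 ≤ Kc k := by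
  cases k with
  | zero => simp [Kc]
  | succ m => unfold Kc; positivity

lemma Kc_le_kk (k : ℕ) : Kc k ≤ ((k:ℝ))^k := by
  cases k with
  | zero => simp [Kc]
  | succ m =>
    show ((m+1:ℕ):ℝ)^m ≤ ((m+1:ℕ):ℝ)^(m+1)
    apply pow_le_pow_right₀ (by exact_mod_cast Nat.one_le_iff_ne_zero.mpr (by omega)) (by omega)

lemma Kc_le (k : ℕ) : Kc k ≤ 1 * (Real.exp 1 ^ k * k.factorial) := by
  rw [one_mul]; exact (Kc_le_kk k).trans (kk_le k)

lemma gc_le (k : ℕ) : ((k:ℝ))^k ≤ 1 * (Real.exp 1 ^ k * k.factorial) := by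
  rw [one_mul]; exact kk_le k

lemma Tc_nonneg {c : ℝ} (hc : 0 ≤ c) (k : ℕ) : 0 ≤ Tc c k := by
  cases k with
  | zero => norm_num [Tc]
  | succ m =>
    unfold Tc
    have : (0:ℝ) ≤ c + ((m+1:ℕ):ℝ) := by positivity
    positivity

lemma Gc_le {c : ℝ} (hc : 0 ≤ c) (k : ℕ) :
    (c+(k:ℝ))^k ≤ Real.exp c * (Real.exp 1 ^ k * k.factorial) := by
  cases k with
  | zero => simpa using Real.one_le_exp hc
  | succ m =>
    calc (c+((m+1:ℕ):ℝ))^(m+1) ≤ Real.exp c * ((m+1:ℕ):ℝ)^(m+1) :=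
          shift_pow_le hc (by omega)
    _ ≤ Real.exp c * (Real.exp 1 ^ (m+1) * (m+1).factorial) := by
        have := kk_le (m+1)
        have he : (0:ℝ) ≤ Real.exp c := (Real.exp_pos c).le
        push_cast at this ⊢
        nlinarith [this, he]

lemma Tc_le {c : ℝ} (hc : 0 ≤ c) (k : ℕ) :
    Tc c k ≤ Real.exp c * (Real.exp 1 ^ k * k.factorial) := by
  cases k with
  | zero => simpa [Tc] using Real.one_le_exp hc
  | succ m =>
    have h1 : Tc c (m+1) ≤ (c+((m+1:ℕ):ℝ))^(m+1) := by
      unfold Tc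
      have hb : (0:ℝ) ≤ c + ((m+1:ℕ):ℝ) := by positivity
      calc c * (c + ((m+1:ℕ):ℝ))^m ≤ (c + ((m+1:ℕ):ℝ)) * (c + ((m+1:ℕ):ℝ))^m := by
            apply mul_le_mul_of_nonneg_right _ (by positivity)
            simp only [le_add_iff_nonneg_right]
            positivity
      _ = (c + ((m+1:ℕ):ℝ))^(m+1) := by ring
    exact h1.trans (Gc_le hc (m+1))

lemma Hc_le {c : ℝ} (hc : 0 ≤ c) (k : ℕ) :
    (c+(k:ℝ))^(k+1) ≤ ((c+1) * Real.exp c * (k+1)) * (Real.exp 1 ^ k * k.factorial) := by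
  have h1 : (c+(k:ℝ))^(k+1) = (c+(k:ℝ)) * (c+(k:ℝ))^k := by ring
  have hk0 : (0:ℝ) ≤ k := Nat.cast_nonneg k
  have h2 : c + (k:ℝ) ≤ (c+1)*((k:ℝ)+1) := by nlinarith
  have h3 : (c+(k:ℝ))^k ≤ Real.exp c * (Real.exp 1 ^ k * k.factorial) := Gc_le hc k
  have hb : (0:ℝ) ≤ c + k := by positivity
  calc (c+(k:ℝ))^(k+1) = (c+(k:ℝ)) * (c+(k:ℝ))^k := by ring
  _ ≤ ((c+1)*((k:ℝ)+1)) * (Real.exp c * (Real.exp 1 ^ k * k.factorial)) := by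
      apply mul_le_mul h2 h3 (by positivity) (by positivity)
  _ = ((c+1) * Real.exp c * ((k:ℝ)+1)) * (Real.exp 1 ^ k * k.factorial) := by ring
lemma mem_abs_le {x r : ℝ} (hx : x ∈ Set.Ioo (-r) r) : |x| ≤ r :=
  abs_le.mpr ⟨hx.1.le, hx.2.le⟩

lemma sum_geom {r : ℝ} (hr : 0 ≤ r) (hEr : Real.exp 1 * r < 1) (M : ℝ) :
    Summable (fun k : ℕ => M * (Real.exp 1 * r)^k) :=
  (summable_geometric_of_lt_one (by positivity) hEr).mul_left M

lemma sum_kgeom {r : ℝ} (hr : 0 ≤ r) (hEr : Real.exp 1 * r < 1) (M : ℝ) :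
    Summable (fun k : ℕ => M * ((k:ℝ) * (Real.exp 1 * r)^k)) := by
  have h := summable_pow_mul_geometric_of_norm_lt_one (R := ℝ) 1
    (r := Real.exp 1 * r) (by rw [Real.norm_eq_abs, abs_of_nonneg (by positivity)]; exact hEr)
  have h2 : (fun k : ℕ => (k:ℝ) * (Real.exp 1 * r)^k)
      = fun k : ℕ => (k:ℝ)^1 * (Real.exp 1 * r)^k := by
    funext k; rw [pow_one]
  exact Summable.mul_left M (by rw [h2]; exact h)

lemma sum_k1geom {r : ℝ} (hr : 0 ≤ r) (hEr : Real.exp 1 * r < 1) (M : ℝ) :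
    Summable (fun k : ℕ => M * (((k:ℝ)+1) * (Real.exp 1 * r)^k)) := by
  have h1 := sum_kgeom hr hEr 1
  have h2 := sum_geom hr hEr 1
  simp only [one_mul] at h1 h2
  have h3 : (fun k : ℕ => (((k:ℝ)+1) * (Real.exp 1 * r)^k))
      = fun k : ℕ => ((k:ℝ) * (Real.exp 1 * r)^k) + (Real.exp 1 * r)^k := by
    funext k; ring
  exact Summable.mul_left M (by rw [h3]; exact h1.add h2)

-- summability of the series themselves
lemma sum_abs_w {x r : ℝ} (hr : 0 ≤ r) (hEr : Real.exp 1 * r < 1) (hx : |x| ≤ r) :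
    Summable fun k : ℕ => |Kc k / k.factorial * x^k| :=
  Summable.of_nonneg_of_le (fun k => abs_nonneg _)
    (fun k => coeff_bound (Kc_nonneg k) (by norm_num) (Kc_le k) hr hx)
    (sum_geom hr hEr 1)

lemma sum_abs_g {x r : ℝ} (hr : 0 ≤ r) (hEr : Real.exp 1 * r < 1) (hx : |x| ≤ r) :
    Summable fun k : ℕ => |((k:ℝ))^k / k.factorial * x^k| :=
  Summable.of_nonneg_of_le (fun k => abs_nonneg _)
    (fun k => coeff_bound (by positivity) (by norm_num) (gc_le k) hr hx)
    (sum_geom hr hEr 1)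

lemma sum_abs_f {c x r : ℝ} (hc : 0 ≤ c) (hr : 0 ≤ r) (hEr : Real.exp 1 * r < 1) (hx : |x| ≤ r) :
    Summable fun k : ℕ => |Tc c k / k.factorial * x^k| :=
  Summable.of_nonneg_of_le (fun k => abs_nonneg _)
    (fun k => coeff_bound (Tc_nonneg hc k) (Real.exp_pos c).le (Tc_le hc k) hr hx)
    (sum_geom hr hEr (Real.exp c))

lemma sum_abs_G {c x r : ℝ} (hc : 0 ≤ c) (hr : 0 ≤ r) (hEr : Real.exp 1 * r < 1) (hx : |x| ≤ r) :
    Summable fun k : ℕ => |(c+(k:ℝ))^k / k.factorial * x^k| :=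
  Summable.of_nonneg_of_le (fun k => abs_nonneg _)
    (fun k => coeff_bound (by positivity) (Real.exp_pos c).le (Gc_le hc k) hr hx)
    (sum_geom hr hEr (Real.exp c))

lemma sum_abs_H {c x r : ℝ} (hc : 0 ≤ c) (hr : 0 ≤ r) (hEr : Real.exp 1 * r < 1) (hx : |x| ≤ r) :
    Summable fun k : ℕ => |(c+(k:ℝ))^(k+1) / k.factorial * x^k| := by
  refine Summable.of_nonneg_of_le (fun k => abs_nonneg _) ?_
    (sum_k1geom hr hEr ((c+1) * Real.exp c))
  intro k
  have h := coeff_bound (a := (c+(k:ℝ))^(k+1)) (x := x) (by positivity)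
    (M := (c+1) * Real.exp c * ((k:ℝ)+1)) (by positivity) (Hc_le hc k) hr hx
  apply le_trans h
  apply le_of_eq; ring

-- derivatives
lemma hasDerivAt_wfun {x r : ℝ} (hr : 0 < r) (hEr : Real.exp 1 * r < 1)
    (hx : x ∈ Set.Ioo (-r) r) : HasDerivAt wfun (wd x) x := by
  apply hasDerivAt_tsum_on (sum_kgeom hr.le hEr (1/r)) (sum_geom hr.le hEr 1)
    (f := fun k x => Kc k / k.factorial * x^k)
    (f' := fun k x => Kc k / k.factorial * ((k:ℝ) * x^(k-1)))
  · intro k y _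
    simpa using (hasDerivAt_pow k y).const_mul (Kc k / (k.factorial:ℝ))
  · exact fun k y hy => coeff_bound (Kc_nonneg k) (by norm_num) (Kc_le k) hr.le (mem_abs_le hy)
  · exact fun k y hy => deriv_coeff_bound (Kc_nonneg k) (Kc_le k) hr (mem_abs_le hy) (by norm_num)
  · exact hx

lemma hasDerivAt_ffun {c x r : ℝ} (hc : 0 ≤ c) (hr : 0 < r) (hEr : Real.exp 1 * r < 1)
    (hx : x ∈ Set.Ioo (-r) r) : HasDerivAt (ffun c) (fd c x) x := by
  apply hasDerivAt_tsum_on (sum_kgeom hr.le hEr (Real.exp c/r)) (sum_geom hr.le hEr (Real.exp c))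
    (f := fun k x => Tc c k / k.factorial * x^k)
    (f' := fun k x => Tc c k / k.factorial * ((k:ℝ) * x^(k-1)))
  · intro k y _
    simpa using (hasDerivAt_pow k y).const_mul (Tc c k / (k.factorial:ℝ))
  · exact fun k y hy => coeff_bound (Tc_nonneg hc k) (Real.exp_pos c).le (Tc_le hc k) hr.le (mem_abs_le hy)
  · exact fun k y hy => deriv_coeff_bound (Tc_nonneg hc k) (Tc_le hc k) hr (mem_abs_le hy) (Real.exp_pos c).le
  · exact hx

lemma hasDerivAt_Gfun {c x r : ℝ} (hc : 0 ≤ c) (hr : 0 < r) (hEr : Real.exp 1 * r < 1)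
    (hx : x ∈ Set.Ioo (-r) r) : HasDerivAt (Gfun c) (Gd c x) x := by
  apply hasDerivAt_tsum_on (sum_kgeom hr.le hEr (Real.exp c/r)) (sum_geom hr.le hEr (Real.exp c))
    (f := fun k x => (c+(k:ℝ))^k / k.factorial * x^k)
    (f' := fun k x => (c+(k:ℝ))^k / k.factorial * ((k:ℝ) * x^(k-1)))
  · intro k y _
    simpa using (hasDerivAt_pow k y).const_mul ((c+(k:ℝ))^k / (k.factorial:ℝ))
  · exact fun k y hy => coeff_bound (by positivity) (Real.exp_pos c).le (Gc_le hc k) hr.le (mem_abs_le hy)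
  · exact fun k y hy => deriv_coeff_bound (by positivity) (Gc_le hc k) hr (mem_abs_le hy) (Real.exp_pos c).le
  · exact hx

lemma w1_coeff_le (k : ℕ) : Kc (k+1) / ((k+1).factorial : ℝ) ≤ Real.exp 1 ^ (k+1) := by
  have h1 : Kc (k+1) ≤ Real.exp 1 ^ (k+1) * (k+1).factorial := by
    have := Kc_le (k+1); linarith
  have hfac : (0:ℝ) < (k+1).factorial := by positivity
  rw [div_le_iff₀ hfac]
  exact h1

lemma hasDerivAt_w1fun {x r : ℝ} (hr : 0 < r) (hEr : Real.exp 1 * r < 1)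
    (hx : x ∈ Set.Ioo (-r) r) :
    HasDerivAt w1fun (∑' k : ℕ, Kc (k+1) / ((k+1).factorial : ℝ) * ((k:ℝ) * x^(k-1))) x := by
  apply hasDerivAt_tsum_on (sum_kgeom hr.le hEr (Real.exp 1/r)) (sum_geom hr.le hEr (Real.exp 1))
    (f := fun k x => Kc (k+1) / ((k+1).factorial : ℝ) * x^k)
    (f' := fun k x => Kc (k+1) / ((k+1).factorial : ℝ) * ((k:ℝ) * x^(k-1)))
  · intro k y _
    simpa using (hasDerivAt_pow k y).const_mul (Kc (k+1) / ((k+1).factorial:ℝ))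
  · intro k y hy
    rw [abs_mul, abs_pow]
    have h1 : |Kc (k+1) / ((k+1).factorial : ℝ)| ≤ Real.exp 1 ^ (k+1) := by
      rw [abs_of_nonneg (div_nonneg (Kc_nonneg _) (by positivity))]
      exact w1_coeff_le k
    have h2 : |y|^k ≤ r^k := pow_le_pow_left₀ (abs_nonneg y) (mem_abs_le hy) k
    calc |Kc (k+1) / ((k+1).factorial : ℝ)| * |y|^k ≤ Real.exp 1 ^ (k+1) * r^k :=
          mul_le_mul h1 h2 (by positivity) (by positivity)
    _ = Real.exp 1 * (Real.exp 1 * r)^k := by rw [mul_pow, pow_succ]; ring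
  · intro k y hy
    cases k with
    | zero => simp
    | succ m =>
      rw [abs_mul, abs_mul, abs_pow, Nat.abs_cast]
      have h1 : |Kc (m+2) / ((m+2).factorial : ℝ)| ≤ Real.exp 1 ^ (m+2) := by
        rw [abs_of_nonneg (div_nonneg (Kc_nonneg _) (by positivity))]
        exact w1_coeff_le (m+1)
      have h2 : |y|^(m+1-1) ≤ r^m := by
        simpa using pow_le_pow_left₀ (abs_nonneg y) (mem_abs_le hy) m
      have h3 : |Kc (m+2) / ((m+2).factorial : ℝ)| * (((m+1:ℕ):ℝ) * |y|^(m+1-1))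
          ≤ Real.exp 1 ^ (m+2) * (((m+1:ℕ):ℝ) * r^m) := by
        apply mul_le_mul h1 _ (by positivity) (by positivity)
        apply mul_le_mul_of_nonneg_left h2 (by positivity)
      apply le_trans h3
      apply le_of_eq
      have hrne : r ≠ 0 := ne_of_gt hr
      generalize Real.exp 1 = E
      field_simp
      ring
  · exact hx
-- tsum identities
lemma w_shift {x r : ℝ} (hr : 0 ≤ r) (hEr : Real.exp 1 * r < 1) (hx : |x| ≤ r) :
    x * w1fun x = wfun x := by
  have hsum : Summable fun k : ℕ => Kc k / k.factorial * x^k := (sum_abs_w hr hEr hx).of_abs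
  calc x * w1fun x = ∑' k : ℕ, x * (Kc (k+1) / ((k+1).factorial:ℝ) * x^k) := tsum_mul_left.symm
  _ = ∑' k : ℕ, Kc (k+1) / ((k+1).factorial:ℝ) * x^(k+1) := by
      apply tsum_congr; intro k; rw [pow_succ]; ring
  _ = wfun x := by
      rw [wfun, Summable.tsum_eq_zero_add hsum]
      simp [Kc]

lemma sum_abs_wd {x r : ℝ} (hr : 0 < r) (hEr : Real.exp 1 * r < 1) (hx : |x| ≤ r) :
    Summable fun k : ℕ => |Kc k / k.factorial * ((k:ℝ) * x^(k-1))| :=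
  Summable.of_nonneg_of_le (fun k => abs_nonneg _)
    (fun k => deriv_coeff_bound (Kc_nonneg k) (Kc_le k) hr hx (by norm_num))
    (sum_kgeom hr.le hEr (1/r))

lemma sum_abs_fd {c x r : ℝ} (hc : 0 ≤ c) (hr : 0 < r) (hEr : Real.exp 1 * r < 1) (hx : |x| ≤ r) :
    Summable fun k : ℕ => |Tc c k / k.factorial * ((k:ℝ) * x^(k-1))| :=
  Summable.of_nonneg_of_le (fun k => abs_nonneg _)
    (fun k => deriv_coeff_bound (Tc_nonneg hc k) (Tc_le hc k) hr hx (Real.exp_pos c).le)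
    (sum_kgeom hr.le hEr (Real.exp c/r))

lemma sum_abs_Gd {c x r : ℝ} (hc : 0 ≤ c) (hr : 0 < r) (hEr : Real.exp 1 * r < 1) (hx : |x| ≤ r) :
    Summable fun k : ℕ => |(c+(k:ℝ))^k / k.factorial * ((k:ℝ) * x^(k-1))| :=
  Summable.of_nonneg_of_le (fun k => abs_nonneg _)
    (fun k => deriv_coeff_bound (by positivity) (Gc_le hc k) hr hx (Real.exp_pos c).le)
    (sum_kgeom hr.le hEr (Real.exp c/r))

lemma x_mul_wd {x r : ℝ} (hr : 0 < r) (hEr : Real.exp 1 * r < 1) (hx : |x| ≤ r) :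
    x * wd x = gfun x - 1 := by
  have hswd : Summable fun k : ℕ => Kc k / k.factorial * ((k:ℝ) * x^(k-1)) :=
    (sum_abs_wd hr hEr hx).of_abs
  have hsg : Summable fun k : ℕ => ((k:ℝ))^k / k.factorial * x^k := (sum_abs_g hr.le hEr hx).of_abs
  have h1 : x * wd x = ∑' k : ℕ, x * (Kc k / k.factorial * ((k:ℝ) * x^(k-1))) := tsum_mul_left.symm
  rw [h1, Summable.tsum_eq_zero_add (hswd.mul_left x), gfun, Summable.tsum_eq_zero_add hsg]
  have h2 : ∀ k : ℕ, x * (Kc (k+1) / ((k+1).factorial:ℝ) * (((k+1:ℕ):ℝ) * x^((k+1)-1)))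
      = (((k+1:ℕ):ℝ))^(k+1) / ((k+1).factorial:ℝ) * x^(k+1) := by
    intro k
    have hKc : Kc (k+1) = ((k+1:ℕ):ℝ)^k := rfl
    rw [hKc, Nat.add_sub_cancel, pow_succ, pow_succ]
    push_cast
    ring
  rw [tsum_congr h2]
  simp [Kc]

lemma x_mul_fd {c x r : ℝ} (hc : 0 ≤ c) (hr : 0 < r) (hEr : Real.exp 1 * r < 1) (hx : |x| ≤ r) :
    x * fd c x = c * (Gfun c x - ffun c x) := by
  have hsfd : Summable fun k : ℕ => Tc c k / k.factorial * ((k:ℝ) * x^(k-1)) :=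
    (sum_abs_fd hc hr hEr hx).of_abs
  have hsG : Summable fun k : ℕ => (c+(k:ℝ))^k / k.factorial * x^k := (sum_abs_G hc hr.le hEr hx).of_abs
  have hsf : Summable fun k : ℕ => Tc c k / k.factorial * x^k := (sum_abs_f hc hr.le hEr hx).of_abs
  have h1 : x * fd c x = ∑' k : ℕ, x * (Tc c k / k.factorial * ((k:ℝ) * x^(k-1))) := tsum_mul_left.symm
  have h2 : c * (Gfun c x - ffun c x)
      = ∑' k : ℕ, c * ((c+(k:ℝ))^k / k.factorial * x^k - Tc c k / k.factorial * x^k) := by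
    rw [Gfun, ffun, ← Summable.tsum_sub hsG hsf, tsum_mul_left]
  rw [h1, h2]
  apply tsum_congr
  intro k
  cases k with
  | zero => simp [Tc]
  | succ m =>
    have hTc : Tc c (m+1) = c * (c + ((m+1:ℕ):ℝ))^m := rfl
    rw [hTc, Nat.add_sub_cancel, pow_succ, pow_succ]
    push_cast
    ring

lemma x_mul_Gd {c x r : ℝ} (hc : 0 ≤ c) (hr : 0 < r) (hEr : Real.exp 1 * r < 1) (hx : |x| ≤ r) :
    x * Gd c x = Hfun c x - c * Gfun c x := by
  have hsGd : Summable fun k : ℕ => (c+(k:ℝ))^k / k.factorial * ((k:ℝ) * x^(k-1)) :=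
    (sum_abs_Gd hc hr hEr hx).of_abs
  have hsG : Summable fun k : ℕ => (c+(k:ℝ))^k / k.factorial * x^k := (sum_abs_G hc hr.le hEr hx).of_abs
  have hsH : Summable fun k : ℕ => (c+(k:ℝ))^(k+1) / k.factorial * x^k := (sum_abs_H hc hr.le hEr hx).of_abs
  have h1 : x * Gd c x = ∑' k : ℕ, x * ((c+(k:ℝ))^k / k.factorial * ((k:ℝ) * x^(k-1))) := tsum_mul_left.symm
  have h2 : Hfun c x - c * Gfun c x
      = ∑' k : ℕ, ((c+(k:ℝ))^(k+1) / k.factorial * x^k - c * ((c+(k:ℝ))^k / k.factorial * x^k)) := by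
    rw [Hfun, Gfun, ← tsum_mul_left, Summable.tsum_sub hsH (hsG.mul_left c)]
  rw [h1, h2]
  apply tsum_congr
  intro k
  cases k with
  | zero => simp
  | succ m =>
    rw [Nat.add_sub_cancel, pow_succ, pow_succ]
    push_cast
    ring
-- finite Cauchy coefficient identities
lemma cauchy_coeff_wg (n : ℕ) (x : ℝ) :
    ∑ k ∈ range (n+1), (Kc k / k.factorial * x^k) *
        ((((n-k:ℕ)):ℝ)^(n-k) / (n-k).factorial * x^(n-k))
      = (if n = 0 then 0 else (n:ℝ)^n / n.factorial * x^n) := by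
  cases n with
  | zero => simp [Kc]
  | succ m =>
    rw [if_neg (by omega)]
    have step : ∀ k ∈ range (m+2), (Kc k / k.factorial * x^k) *
        ((((m+1-k:ℕ)):ℝ)^(m+1-k) / (m+1-k).factorial * x^(m+1-k))
        = (((m+1).choose k : ℝ) * Kc k * (((m+1:ℕ):ℝ) - k)^(m+1-k)) * (x^(m+1) / (m+1).factorial) := by
      intro k hk
      simp only [Finset.mem_range] at hk
      have hkle : k ≤ m+1 := by omega
      have hfact : ((m+1).choose k : ℝ) * (k.factorial : ℝ) * (((m+1-k).factorial : ℝ)) = ((m+1).factorial : ℝ) := by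
        exact_mod_cast congrArg (fun t : ℕ => (t:ℝ)) (Nat.choose_mul_factorial_mul_factorial hkle)
      have hxp : x^k * x^(m+1-k) = x^(m+1) := by
        rw [← pow_add]; congr 1; omega
      have hcast : (((m+1:ℕ):ℝ) - k)^(m+1-k) = (((m+1-k:ℕ)):ℝ)^(m+1-k) := by
        rw [Nat.cast_sub hkle]
      rw [hcast]
      have hk1 : ((k.factorial:ℝ)) ≠ 0 := by positivity
      have hk2 : (((m+1-k).factorial:ℝ)) ≠ 0 := by positivity
      have hk3 : (((m+1).factorial:ℝ)) ≠ 0 := by positivity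
      set A := (((m+1-k:ℕ)):ℝ)^(m+1-k) with hA
      set P := x^k with hP
      set Q := x^(m+1-k) with hQ
      set R := x^(m+1) with hR
      set F1 := ((k.factorial:ℝ)) with hF1
      set F2 := (((m+1-k).factorial:ℝ)) with hF2
      set F3 := (((m+1).factorial:ℝ)) with hF3
      set C := (((m+1).choose k : ℝ)) with hC
      have hCne : C ≠ 0 := by
        rw [hC]
        exact_mod_cast (Nat.choose_pos hkle).ne'
      rw [← hxp, ← hfact]
      field_simp
    rw [Finset.sum_congr rfl step, ← Finset.sum_mul]
    rw [J_id (m+1) (by omega) ((m+1:ℕ):ℝ)]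
    have : ((m+1:ℕ):ℝ) * (((m+1:ℕ):ℝ))^(m+1-1) = (((m+1:ℕ):ℝ))^(m+1) := by
      rw [Nat.add_sub_cancel, pow_succ]; ring
    rw [this]
    push_cast
    ring

lemma cauchy_coeff_fG (c : ℝ) (n : ℕ) (x : ℝ) :
    ∑ k ∈ range (n+1), (Tc c k / k.factorial * x^k) *
        ((((n-k:ℕ)):ℝ)^(n-k) / (n-k).factorial * x^(n-k))
      = (c+(n:ℝ))^n / n.factorial * x^n := by
  have step : ∀ k ∈ range (n+1), (Tc c k / k.factorial * x^k) *
      ((((n-k:ℕ)):ℝ)^(n-k) / (n-k).factorial * x^(n-k))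
      = ((n.choose k : ℝ) * Tc c k * (((n:ℕ):ℝ) - k)^(n-k)) * (x^n / n.factorial) := by
    intro k hk
    simp only [Finset.mem_range] at hk
    have hkle : k ≤ n := by omega
    have hfact : ((n).choose k : ℝ) * (k.factorial : ℝ) * (((n-k).factorial : ℝ)) = ((n).factorial : ℝ) := by
      exact_mod_cast congrArg (fun t : ℕ => (t:ℝ)) (Nat.choose_mul_factorial_mul_factorial hkle)
    have hxp : x^k * x^(n-k) = x^n := by
      rw [← pow_add]; congr 1; omega
    have hcast : (((n:ℕ):ℝ) - k)^(n-k) = (((n-k:ℕ)):ℝ)^(n-k) := by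
      rw [Nat.cast_sub hkle]
    rw [hcast]
    have hk1 : ((k.factorial:ℝ)) ≠ 0 := by positivity
    have hk2 : (((n-k).factorial:ℝ)) ≠ 0 := by positivity
    have hk3 : (((n).factorial:ℝ)) ≠ 0 := by positivity
    set A := (((n-k:ℕ)):ℝ)^(n-k) with hA
    set P := x^k with hP
    set Q := x^(n-k) with hQ
    set R := x^n with hR
    set F1 := ((k.factorial:ℝ)) with hF1
    set F2 := (((n-k).factorial:ℝ)) with hF2
    set F3 := (((n).factorial:ℝ)) with hF3
    set C := ((n.choose k : ℝ)) with hC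
    have hCne : C ≠ 0 := by
      rw [hC]
      exact_mod_cast (Nat.choose_pos hkle).ne'
    rw [← hxp, ← hfact]
    field_simp
  rw [Finset.sum_congr rfl step, ← Finset.sum_mul, abel_id n c ((n:ℕ):ℝ)]
  ring

lemma mertens_wg {x r : ℝ} (hr : 0 ≤ r) (hEr : Real.exp 1 * r < 1) (hx : |x| ≤ r) :
    gfun x * wfun x = gfun x - 1 := by
  have hW := sum_abs_w hr hEr hx
  have hG := sum_abs_g hr hEr hx
  have hprod := tsum_mul_tsum_eq_tsum_sum_range_of_summable_norm
    (f := fun k : ℕ => Kc k / k.factorial * x^k)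
    (g := fun k : ℕ => ((k:ℝ))^k / k.factorial * x^k)
    (by simpa only [Real.norm_eq_abs] using hW) (by simpa only [Real.norm_eq_abs] using hG)
  have h1 : wfun x * gfun x = ∑' n : ℕ, (if n = 0 then (0:ℝ) else (n:ℝ)^n / n.factorial * x^n) := by
    rw [wfun, gfun, hprod]
    exact tsum_congr (fun n => cauchy_coeff_wg n x)
  have hsd : Summable fun n : ℕ => (if n = 0 then (0:ℝ) else (n:ℝ)^n / n.factorial * x^n) := by
    apply Summable.of_norm_bounded hG
    intro n
    cases n with
    | zero => simp
    | succ m => rw [Real.norm_eq_abs, if_neg (Nat.succ_ne_zero m)]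
  have hsg : Summable fun k : ℕ => ((k:ℝ))^k / k.factorial * x^k := hG.of_abs
  have h2 : ∑' n : ℕ, (if n = 0 then (0:ℝ) else (n:ℝ)^n / n.factorial * x^n) = gfun x - 1 := by
    rw [Summable.tsum_eq_zero_add hsd, gfun, Summable.tsum_eq_zero_add hsg]
    simp
  rw [mul_comm, h1, h2]

lemma mertens_fG {c x r : ℝ} (hc : 0 ≤ c) (hr : 0 ≤ r) (hEr : Real.exp 1 * r < 1) (hx : |x| ≤ r) :
    ffun c x * gfun x = Gfun c x := by
  have hF := sum_abs_f hc hr hEr hx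
  have hG := sum_abs_g hr hEr hx
  have hprod := tsum_mul_tsum_eq_tsum_sum_range_of_summable_norm
    (f := fun k : ℕ => Tc c k / k.factorial * x^k)
    (g := fun k : ℕ => ((k:ℝ))^k / k.factorial * x^k)
    (by simpa only [Real.norm_eq_abs] using hF) (by simpa only [Real.norm_eq_abs] using hG)
  rw [ffun, gfun, hprod, Gfun]
  exact tsum_congr (fun n => cauchy_coeff_fG c n x)
-- setup facts about t₀ and r
lemma setup_facts {β : ℝ} (hβ0 : 0 < β) (hβ1 : β < 1) :
    0 < β*Real.exp (-β) ∧
    β*Real.exp (-β) < (β*Real.exp (-β) + Real.exp (-1))/2 ∧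
    Real.exp 1 * ((β*Real.exp (-β) + Real.exp (-1))/2) < 1 := by
  have hEt : Real.exp 1 * (β*Real.exp (-β)) < 1 := by
    have h2 : β < Real.exp (β-1) := by
      have := Real.add_one_lt_exp (show β - 1 ≠ 0 by linarith)
      linarith
    have h3 : Real.exp 1 * (β * Real.exp (-β)) = β * Real.exp (1-β) := by
      rw [show (1-β) = 1 + -β by ring, Real.exp_add]
      ring
    rw [h3]
    have h4 : Real.exp (1-β) * Real.exp (β-1) = 1 := by
      rw [← Real.exp_add]; norm_num
    nlinarith [Real.exp_pos (1-β), Real.exp_pos (β-1)]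
  have hE1 : Real.exp 1 * Real.exp (-1) = 1 := by rw [← Real.exp_add]; norm_num
  have ht0 : 0 < β*Real.exp (-β) := by positivity
  have hEpos : (0:ℝ) < Real.exp 1 := Real.exp_pos 1
  refine ⟨ht0, ?_, ?_⟩
  · have : β*Real.exp (-β) < Real.exp (-1) := by
      by_contra h
      push_neg at h
      have := mul_le_mul_of_nonneg_left h hEpos.le
      rw [hE1] at this
      linarith
    linarith
  · nlinarith

lemma wfun_zero : wfun 0 = 0 := by
  rw [wfun]
  rw [tsum_eq_single 0 (fun k hk => by
    rw [zero_pow hk]; ring)]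
  simp [Kc]

lemma w1fun_zero : w1fun 0 = 1 := by
  rw [w1fun]
  rw [tsum_eq_single 0 (fun k hk => by
    rw [zero_pow hk]; ring)]
  simp [Kc]

lemma ffun_zero (c : ℝ) : ffun c 0 = 1 := by
  rw [ffun]
  rw [tsum_eq_single 0 (fun k hk => by
    rw [zero_pow hk]; ring)]
  simp [Tc]

-- the main W-value lemma
lemma w_eq {t₀ r : ℝ} (ht0 : 0 < t₀) (htr : t₀ < r) (hEr : Real.exp 1 * r < 1) :
    wfun t₀ * Real.exp (-(wfun t₀)) = t₀ ∧ 0 ≤ wfun t₀ ∧ wfun t₀ < 1 ∧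
      gfun t₀ * (1 - wfun t₀) = 1 := by
  have hr : 0 < r := lt_trans ht0 htr
  have habs : ∀ x : ℝ, x ∈ Set.Ioo (0:ℝ) r → |x| ≤ r :=
    fun x hx => abs_le.mpr ⟨by linarith [hx.1], hx.2.le⟩
  have hmem : ∀ x : ℝ, x ∈ Set.Ioo (0:ℝ) r → x ∈ Set.Ioo (-r) r :=
    fun x hx => ⟨by linarith [hx.1], hx.2⟩
  have ht0m : t₀ ∈ Set.Ioo (0:ℝ) r := ⟨ht0, htr⟩
  set q : ℝ → ℝ := fun x => wfun x * Real.exp (-(wfun x)) / x with hq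
  -- derivative of q is zero on Ioo 0 r
  have hqd : ∀ x ∈ Set.Ioo (0:ℝ) r, HasDerivAt q 0 x := by
    intro x hx
    have hW : HasDerivAt wfun (wd x) x := hasDerivAt_wfun hr hEr (hmem x hx)
    have hexp : HasDerivAt (fun y => Real.exp (-(wfun y))) (Real.exp (-(wfun x)) * -(wd x)) x :=
      (hW.neg).exp
    have hnum := hW.mul hexp
    have hdiv := hnum.div (hasDerivAt_id x) (ne_of_gt hx.1)
    have hxwd := x_mul_wd hr hEr (habs x hx)
    have hgw := mertens_wg hr.le hEr (habs x hx)
    have h0 : ((wd x * Real.exp (-(wfun x)) + wfun x * (Real.exp (-(wfun x)) * -(wd x))) * x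
        - wfun x * Real.exp (-(wfun x)) * 1) / x^2 = 0 := by
      have expand : (wd x * Real.exp (-(wfun x)) + wfun x * (Real.exp (-(wfun x)) * -(wd x))) * x
          - wfun x * Real.exp (-(wfun x)) * 1
          = Real.exp (-(wfun x)) * ((x * wd x) * (1 - wfun x) - wfun x) := by ring
      rw [expand, hxwd]
      have : (gfun x - 1) * (1 - wfun x) - wfun x = 0 := by linear_combination -hgw
      rw [this]
      simp
    rw [← h0]
    exact hdiv
  -- q is constant on Ioo 0 t₀ equal to q t₀
  have hconst := const_on_Ioo htr hqd
  -- limit of q at 0⁺ is 1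
  have hlim : Tendsto q (nhdsWithin 0 (Set.Ioi 0)) (nhds 1) := by
    have h0m : (0:ℝ) ∈ Set.Ioo (-r) r := ⟨by linarith, hr⟩
    have hWc : ContinuousAt wfun 0 := (hasDerivAt_wfun hr hEr h0m).continuousAt
    have hw1c : ContinuousAt w1fun 0 := (hasDerivAt_w1fun hr hEr h0m).continuousAt
    have hcont : ContinuousAt (fun x => w1fun x * Real.exp (-(wfun x))) 0 :=
      hw1c.mul ((Real.continuous_exp.continuousAt).comp (hWc.neg))
    have hval : w1fun 0 * Real.exp (-(wfun 0)) = 1 := by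
      rw [wfun_zero, w1fun_zero]; simp
    have h1 : Tendsto (fun x => w1fun x * Real.exp (-(wfun x))) (nhdsWithin 0 (Set.Ioi 0)) (nhds 1) := by
      rw [← hval]
      exact (hcont.tendsto).mono_left nhdsWithin_le_nhds
    apply h1.congr'
    filter_upwards [Ioo_mem_nhdsGT_of_mem (show (0:ℝ) ∈ Set.Ico 0 r from ⟨le_refl 0, hr⟩)] with x hx
    have hsh := w_shift hr.le hEr (habs x hx)
    have hxne : x ≠ 0 := ne_of_gt hx.1
    show w1fun x * Real.exp (-(wfun x)) = wfun x * Real.exp (-(wfun x)) / x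
    rw [← hsh]
    field_simp
  have hq1 : q t₀ = 1 := const_eval ht0 hconst hlim
  have hwet : wfun t₀ * Real.exp (-(wfun t₀)) = t₀ := by
    have : wfun t₀ * Real.exp (-(wfun t₀)) / t₀ = 1 := hq1
    field_simp at this
    linarith
  -- nonnegativity
  have hw0 : 0 ≤ wfun t₀ := by
    apply tsum_nonneg
    intro k
    have := Kc_nonneg k
    positivity
  -- g * (1 - w) = 1
  have hgw := mertens_wg hr.le hEr (habs t₀ ht0m)
  have hgw1 : gfun t₀ * (1 - wfun t₀) = 1 := by linear_combination -hgw
  -- w < 1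
  have hg1 : 1 ≤ gfun t₀ := by
    have hsg : Summable fun k : ℕ => ((k:ℝ))^k / k.factorial * t₀^k :=
      (sum_abs_g hr.le hEr (habs t₀ ht0m)).of_abs
    have h := Summable.le_tsum hsg 0 (fun k _ => by positivity)
    simpa [gfun] using h
  have hw1 : wfun t₀ < 1 := by nlinarith
  exact ⟨hwet, hw0, hw1, hgw1⟩

lemma w_val {β : ℝ} (hβ0 : 0 < β) (hβ1 : β < 1) :
    wfun (β*Real.exp (-β)) = β ∧ gfun (β*Real.exp (-β)) * (1-β) = 1 := by
  obtain ⟨ht0, htr, hEr⟩ := setup_facts hβ0 hβ1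
  obtain ⟨hwet, hw0, hw1, hgw1⟩ := w_eq ht0 htr hEr
  have hmono : StrictMonoOn (fun x : ℝ => x * Real.exp (-x)) (Set.Icc 0 1) := by
    apply strictMonoOn_of_deriv_pos (convex_Icc 0 1)
    · fun_prop
    · intro x hx
      rw [interior_Icc] at hx
      have hd : HasDerivAt (fun x : ℝ => x * Real.exp (-x)) ((1-x) * Real.exp (-x)) x := by
        have h := (hasDerivAt_id x).fun_mul ((hasDerivAt_id x).fun_neg.exp)
        simp only [id] at h
        refine h.congr_deriv ?_
        ring
      rw [hd.deriv]
      have := Real.exp_pos (-x)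
      nlinarith [hx.1, hx.2]
  have hweq : wfun (β*Real.exp (-β)) = β := by
    apply hmono.injOn ⟨hw0, hw1.le⟩ ⟨hβ0.le, hβ1.le⟩
    simp only
    rw [hwet]
  rw [hweq] at hgw1
  exact ⟨hweq, hgw1⟩
lemma fd_eq {c x r : ℝ} (hc : 0 ≤ c) (hr : 0 < r) (hEr : Real.exp 1 * r < 1)
    (hx : x ∈ Set.Ioo (0:ℝ) r) : fd c x = c * ffun c x * wd x := by
  have habs : |x| ≤ r := abs_le.mpr ⟨by linarith [hx.1], hx.2.le⟩
  have hxfd := x_mul_fd hc hr hEr habs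
  have hxwd := x_mul_wd hr hEr habs
  have hfG := mertens_fG hc hr.le hEr habs
  have hxne : x ≠ 0 := ne_of_gt hx.1
  apply mul_left_cancel₀ hxne
  rw [hxfd]
  calc c * (Gfun c x - ffun c x) = c * (ffun c x * gfun x - ffun c x) := by rw [hfG]
  _ = c * ffun c x * (gfun x - 1) := by ring
  _ = c * ffun c x * (x * wd x) := by rw [hxwd]
  _ = x * (c * ffun c x * wd x) := by ring

lemma f_val {β c : ℝ} (hβ0 : 0 < β) (hβ1 : β < 1) (hc : 0 < c) :
    ffun c (β*Real.exp (-β)) = Real.exp (c*β) := by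
  obtain ⟨ht0, htr, hEr⟩ := setup_facts hβ0 hβ1
  obtain ⟨hwv, hgv⟩ := w_val hβ0 hβ1
  set t₀ := β*Real.exp (-β) with ht₀
  set r := (β*Real.exp (-β) + Real.exp (-1))/2 with hrdef
  have hr : 0 < r := lt_trans ht0 htr
  have habs : ∀ x : ℝ, x ∈ Set.Ioo (0:ℝ) r → |x| ≤ r :=
    fun x hx => abs_le.mpr ⟨by linarith [hx.1], hx.2.le⟩
  have hmem : ∀ x : ℝ, x ∈ Set.Ioo (0:ℝ) r → x ∈ Set.Ioo (-r) r :=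
    fun x hx => ⟨by linarith [hx.1], hx.2⟩
  set p : ℝ → ℝ := fun x => ffun c x * Real.exp (-(c * wfun x)) with hp
  have hpd : ∀ x ∈ Set.Ioo (0:ℝ) r, HasDerivAt p 0 x := by
    intro x hx
    have hW : HasDerivAt wfun (wd x) x := hasDerivAt_wfun hr hEr (hmem x hx)
    have hF : HasDerivAt (ffun c) (fd c x) x := hasDerivAt_ffun hc.le hr hEr (hmem x hx)
    have hexp : HasDerivAt (fun y => Real.exp (-(c * wfun y)))
        (Real.exp (-(c * wfun x)) * -(c * wd x)) x := ((hW.const_mul c).neg).exp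
    have hmul := hF.mul hexp
    have hfd := fd_eq hc.le hr hEr hx
    have h0 : fd c x * Real.exp (-(c * wfun x))
        + ffun c x * (Real.exp (-(c * wfun x)) * -(c * wd x)) = 0 := by
      rw [hfd]; ring
    rw [← h0]
    exact hmul
  have hconst := const_on_Ioo htr hpd
  have hlim : Tendsto p (nhdsWithin 0 (Set.Ioi 0)) (nhds 1) := by
    have h0m : (0:ℝ) ∈ Set.Ioo (-r) r := ⟨by linarith, hr⟩
    have hWc : ContinuousAt wfun 0 := (hasDerivAt_wfun hr hEr h0m).continuousAt
    have hFc : ContinuousAt (ffun c) 0 := (hasDerivAt_ffun hc.le hr hEr h0m).continuousAt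
    have hcont : ContinuousAt p 0 :=
      hFc.mul ((Real.continuous_exp.continuousAt).comp ((hWc.const_mul c).neg))
    have hval : p 0 = 1 := by
      show ffun c 0 * Real.exp (-(c * wfun 0)) = 1
      rw [wfun_zero, ffun_zero]; simp
    rw [← hval]
    exact (hcont.tendsto).mono_left nhdsWithin_le_nhds
  have hp1 : p t₀ = 1 := const_eval ht0 hconst hlim
  have : ffun c t₀ * Real.exp (-(c * wfun t₀)) = 1 := hp1
  rw [hwv] at this
  have hexp : Real.exp (-(c*β)) * Real.exp (c*β) = 1 := by
    rw [← Real.exp_add]; simp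
  nlinarith [this, hexp, Real.exp_pos (c*β), Real.exp_pos (-(c*β))]

lemma H_val {β c : ℝ} (hβ0 : 0 < β) (hβ1 : β < 1) (hc : 0 < c) :
    Hfun c (β*Real.exp (-β)) = Real.exp (c*β) * (c/(1-β)^2 + β/(1-β)^3) := by
  obtain ⟨ht0, htr, hEr⟩ := setup_facts hβ0 hβ1
  obtain ⟨hwv, hgv⟩ := w_val hβ0 hβ1
  have hfv := f_val hβ0 hβ1 hc
  set t₀ := β*Real.exp (-β) with ht₀
  set r := (β*Real.exp (-β) + Real.exp (-1))/2 with hrdef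
  have hr : 0 < r := lt_trans ht0 htr
  have ht0I : t₀ ∈ Set.Ioo (-r) r := ⟨by linarith, htr⟩
  have ht0abs : |t₀| ≤ r := abs_le.mpr ⟨by linarith, htr.le⟩
  have h1β : (1:ℝ) - β ≠ 0 := by intro h; rw [sub_eq_zero] at h; linarith
  -- derivative of Gfun two ways
  have hGd : HasDerivAt (Gfun c) (Gd c t₀) t₀ := hasDerivAt_Gfun hc.le hr hEr ht0I
  have hW : HasDerivAt wfun (wd t₀) t₀ := hasDerivAt_wfun hr hEr ht0I
  have hF : HasDerivAt (ffun c) (fd c t₀) t₀ := hasDerivAt_ffun hc.le hr hEr ht0I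
  -- gfun eventually equals (1 - wfun)⁻¹
  have hopen : Set.Ioo (0:ℝ) r ∈ nhds t₀ := isOpen_Ioo.mem_nhds ⟨ht0, htr⟩
  have hg_evt : gfun =ᶠ[nhds t₀] fun x => (1 - wfun x)⁻¹ := by
    filter_upwards [hopen] with x hx
    have hgw := mertens_wg hr.le hEr (abs_le.mpr ⟨by linarith [hx.1], hx.2.le⟩)
    have h2 : gfun x * (1 - wfun x) = 1 := by linear_combination -hgw
    have hne : 1 - wfun x ≠ 0 := by
      intro h
      rw [h] at h2
      simp at h2
    field_simp
    linear_combination h2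
  have hne : 1 - wfun t₀ ≠ 0 := by rw [hwv]; exact h1β
  have hinv : HasDerivAt (fun x => (1 - wfun x)⁻¹) (wd t₀ / (1 - wfun t₀)^2) t₀ := by
    have h1w : HasDerivAt (fun x => 1 - wfun x) (-(wd t₀)) t₀ := hW.const_sub 1
    have h := h1w.fun_inv hne
    refine h.congr_deriv ?_
    rw [neg_neg]
  have hgd : HasDerivAt gfun (wd t₀ / (1 - wfun t₀)^2) t₀ := by
    rw [hg_evt.hasDerivAt_iff]
    exact hinv
  have hGf_evt : (Gfun c) =ᶠ[nhds t₀] fun x => ffun c x * gfun x := by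
    have hopen2 : Set.Ioo (-r) r ∈ nhds t₀ := isOpen_Ioo.mem_nhds ht0I
    filter_upwards [hopen2] with x hx
    exact (mertens_fG hc.le hr.le hEr (abs_le.mpr ⟨hx.1.le, hx.2.le⟩)).symm
  have hprod : HasDerivAt (fun x => ffun c x * gfun x)
      (fd c t₀ * gfun t₀ + ffun c t₀ * (wd t₀ / (1 - wfun t₀)^2)) t₀ := hF.mul hgd
  have hGd2 : HasDerivAt (Gfun c) (fd c t₀ * gfun t₀ + ffun c t₀ * (wd t₀ / (1 - wfun t₀)^2)) t₀ :=
    hGf_evt.hasDerivAt_iff.mpr hprod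
  have huniq : Gd c t₀ = fd c t₀ * gfun t₀ + ffun c t₀ * (wd t₀ / (1 - wfun t₀)^2) :=
    hGd.unique hGd2
  -- putting it together
  have hxGd := x_mul_Gd hc.le hr hEr ht0abs
  have hH : Hfun c t₀ = c * Gfun c t₀ + t₀ * Gd c t₀ := by linarith [hxGd]
  have hfd := fd_eq hc.le hr hEr ⟨ht0, htr⟩
  have hxwd := x_mul_wd hr hEr ht0abs
  have hfG := mertens_fG hc.le hr.le hEr ht0abs
  -- values
  have hgval : gfun t₀ = (1-β)⁻¹ := by
    field_simp
    linear_combination hgv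
  have hwd_val : t₀ * wd t₀ = β / (1-β) := by
    rw [hxwd, hgval]
    field_simp
    ring
  have hGval : Gfun c t₀ = Real.exp (c*β) * (1-β)⁻¹ := by
    rw [← hfG, hfv, hgval]
  have e2 : t₀ * fd c t₀ = c * Real.exp (c*β) * (β/(1-β)) := by
    rw [hfd, hfv]
    linear_combination (c * Real.exp (c*β)) * hwd_val
  have e1 : t₀ * Gd c t₀ = (t₀ * fd c t₀) * gfun t₀
      + ffun c t₀ * ((t₀ * wd t₀) / (1 - wfun t₀)^2) := by
    rw [huniq]; ring
  rw [hH, e1, e2, hGval, hfv, hwd_val, hwv, hgval]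
  field_simp
  ring
lemma key_hasSum {β c : ℝ} (hβ0 : 0 < β) (hβ1 : β < 1) (hc : 0 < c) :
    HasSum (fun k : ℕ => (c+(k:ℝ))^(k+1) / k.factorial * (β*Real.exp (-β))^k)
      (Real.exp (c*β) * (c/(1-β)^2 + β/(1-β)^3)) := by
  obtain ⟨ht0, htr, hEr⟩ := setup_facts hβ0 hβ1
  have hr : 0 < (β*Real.exp (-β) + Real.exp (-1))/2 := lt_trans ht0 htr
  have habs : |β*Real.exp (-β)| ≤ (β*Real.exp (-β) + Real.exp (-1))/2 :=
    abs_le.mpr ⟨by linarith, htr.le⟩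
  have hs : Summable fun k : ℕ => (c+(k:ℝ))^(k+1) / k.factorial * (β*Real.exp (-β))^k :=
    (sum_abs_H hc.le hr.le hEr habs).of_abs
  have := hs.hasSum
  rwa [show (∑' k : ℕ, (c+(k:ℝ))^(k+1) / k.factorial * (β*Real.exp (-β))^k)
      = Real.exp (c*β) * (c/(1-β)^2 + β/(1-β)^3) from H_val hβ0 hβ1 hc] at this

theorem jain_S2 (α β : ℝ) (hα : 0 < α) (hβ0 : 0 ≤ β) (hβ1 : β < 1) :
    HasSum (fun k : ℕ =>
      (α + β * k) ^ (k + 1) / (Nat.factorial k) * Real.exp (-(α + β * k)))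
      (α / (1 - β) ^ 2 + β ^ 2 / (1 - β) ^ 3) := by
  rcases eq_or_lt_of_le hβ0 with h0 | h0
  · -- β = 0
    subst h0
    have hexp : HasSum (fun k : ℕ => α^k / k.factorial) (Real.exp α) := by
      rw [Real.exp_eq_exp_ℝ]
      exact NormedSpace.expSeries_div_hasSum_exp α
    have h2 := (hexp.mul_left (α * Real.exp (-α)))
    have h3 : (fun k : ℕ => α * Real.exp (-α) * (α^k / k.factorial))
        = fun k : ℕ => (α + 0 * k) ^ (k + 1) / (Nat.factorial k) * Real.exp (-(α + 0 * k)) := by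
      funext k
      rw [zero_mul, add_zero, pow_succ]
      ring
    rw [h3] at h2
    have h4 : α * Real.exp (-α) * Real.exp α = α / (1 - 0) ^ 2 + 0 ^ 2 / (1 - 0) ^ 3 := by
      rw [mul_assoc, ← Real.exp_add]
      norm_num
    rwa [h4] at h2
  · -- β > 0
    set c := α / β with hcdef
    have hc : 0 < c := div_pos hα h0
    have hkey := key_hasSum h0 hβ1 hc
    have hcb : c * β = α := by
      rw [hcdef]; field_simp
    have hmul := hkey.mul_left (β * Real.exp (-α))
    have hfun : (fun k : ℕ => β * Real.exp (-α) * ((c+(k:ℝ))^(k+1) / k.factorial * (β*Real.exp (-β))^k))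
        = fun k : ℕ => (α + β * k) ^ (k + 1) / (Nat.factorial k) * Real.exp (-(α + β * k)) := by
      funext k
      have hbk : α + β * k = β * (c + k) := by
        rw [hcdef]; field_simp
      have hexp1 : Real.exp (-(α + β * k)) = Real.exp (-α) * Real.exp (-β)^k := by
        rw [← Real.exp_nat_mul, ← Real.exp_add]
        congr 1
        ring
      rw [hexp1, hbk, mul_pow, mul_pow]
      have hbne : (β:ℝ) ≠ 0 := ne_of_gt h0
      field_simp
      ring
    have hval : β * Real.exp (-α) * (Real.exp (c*β) * (c/(1-β)^2 + β/(1-β)^3))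
        = α / (1 - β) ^ 2 + β ^ 2 / (1 - β) ^ 3 := by
      have hee : Real.exp (-α) * Real.exp α = 1 := by rw [← Real.exp_add]; simp
      have h1β : (1:ℝ) - β ≠ 0 := by intro h; rw [sub_eq_zero] at h; linarith
      have hbne : (β:ℝ) ≠ 0 := ne_of_gt h0
      rw [hcb]
      calc β * Real.exp (-α) * (Real.exp α * (c/(1-β)^2 + β/(1-β)^3))
          = (Real.exp (-α) * Real.exp α) * (β * (c/(1-β)^2 + β/(1-β)^3)) := by ring
      _ = β * (c/(1-β)^2 + β/(1-β)^3) := by rw [hee]; ring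
      _ = α / (1 - β) ^ 2 + β ^ 2 / (1 - β) ^ 3 := by rw [hcdef]; field_simp
    rw [hfun, hval] at hmul
    exact hmul
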